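/- Let h ∈ ℓ¹(ℤ) ∩ ℓ²(ℤ) with Z-transform H satisfying ess sup_{ω} |H(e^{iω})| = κ < ∞. Let x_0, η ∈ ℓ²(ℤ) and x = x_0 + η, with Z-transforms X_0 and N respectively, where N ∈ L¹(−π,π) with ∫_{−π}^{π} |N(e^{iω})| dω = σ, and suppose (1/2π)∫_{−π}^{π} |(H(e^{iω}) − 1)X_0(e^{iω})| dω ≤ ε and (H−1)X_0 ∈ L¹(−π,π). Then the estimate x̂ = h∘x satisfies sup_{t∈ℤ} |x̂(t) − x(t)| ≤ ε + (σ/(2π))(κ + 1). -/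

import Mathlib

open MeasureTheory Real Filter NNReal ENNReal

noncomputable section

/-- Convolution of two sequences: `(h ∘ x)(t) = Σ_{s ∈ ℤ} h(t - s) x(s)`. -/
def conv (h x : ℤ → ℂ) (τ : ℤ) : ℂ := ∑' s : ℤ, h (τ - s) * x s

/-- `X` is (a representative of) the Z-transform of `x ∈ ℓ²(ℤ)`: `X ∈ L²((-π, π])` and
the Fourier coefficients of `X` are the values of `x`. -/
def IsZTransform (x : ℤ → ℂ) (X : ℝ → ℂ) : Prop :=
  MemLp X 2 (volume.restrict (Set.Ioc (-π) π)) ∧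
  ∀ τ : ℤ, x τ =
    ((1 / (2 * π) : ℝ) : ℂ) * ∫ ω in (-π)..π, X ω * Complex.exp (Complex.I * ω * τ)

lemma normExpI (ω : ℝ) (s : ℤ) : ‖Complex.exp (Complex.I * ω * s)‖ = 1 := by
  rw [Complex.norm_exp]; simp [Complex.mul_re]

lemma contExpI (s : ℤ) : Continuous (fun ω : ℝ => Complex.exp (Complex.I * ω * s)) := by
  fun_prop

lemma integrable_mulE {f : ℝ → ℂ} {μ : Measure ℝ} (hf : Integrable f μ) (s : ℤ) :
    Integrable (fun ω : ℝ => f ω * Complex.exp (Complex.I * ω * s)) μ := by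
  have hb : Integrable (fun ω : ℝ => Complex.exp (Complex.I * ω * s) * f ω) μ :=
    hf.bdd_mul (c := 1) (contExpI s).aestronglyMeasurable
      (Eventually.of_forall fun ω => le_of_eq (normExpI ω s))
  exact hb.congr (Eventually.of_forall fun ω => mul_comm _ _)

lemma tsum_shift (h : ℤ → ℂ) (c Y Hω : ℂ) (ω : ℝ) (τ : ℤ)
    (hHω : Hω = ∑' u : ℤ, h u * Complex.exp (-(Complex.I * ω * u))) :
    ∑' s : ℤ, (h (τ - s) * c) * (Y * Complex.exp (Complex.I * ω * s))
      = c * (Hω * (Y * Complex.exp (Complex.I * ω * τ))) := by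
  rw [← (Equiv.subLeft τ).tsum_eq]
  have key : ∀ u : ℤ, (h (τ - (Equiv.subLeft τ u)) * c) *
      (Y * Complex.exp (Complex.I * ω * ((Equiv.subLeft τ u : ℤ) : ℂ)))
      = (c * (Y * Complex.exp (Complex.I * ω * τ))) *
        (h u * Complex.exp (-(Complex.I * ω * u))) := by
    intro u
    have h1 : (τ : ℂ) - (u : ℂ) = ((τ - u : ℤ) : ℂ) := by push_cast; ring
    simp only [Equiv.subLeft_apply, sub_sub_cancel]
    rw [← h1, show Complex.I * ω * ((τ:ℂ) - u) = Complex.I * ω * τ + -(Complex.I * ω * u) by ring,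
      Complex.exp_add]
    ring
  simp only [key]
  exact tsum_mul_left.trans (by rw [← hHω]; ring)

set_option maxHeartbeats 2000000 in
/-- Robustness with respect to noise contamination: if `h ∈ ℓ¹ ∩ ℓ²` has Z-transform `H`
with `ess sup |H| = κ < ∞`, and `x = x₀ + η` where the Z-transform `N` of the noise `η`
satisfies `∫|N| = σ`, while `(1/2π)∫|(H-1)X₀| ≤ ε`, then the estimate `x̂ = h ∘ x`
satisfies `sup_t |x̂(t) - x(t)| ≤ ε + (σ/(2π))(κ+1)`. -/
theorem recovery_robust_to_noise (h : ℤ → ℂ) (hh1 : Memℓp h 1) (hh2 : Memℓp h 2)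
    (H : ℝ → ℂ)
    (hH : ∀ ω : ℝ, H ω = ∑' τ : ℤ, h τ * Complex.exp (-(Complex.I * ω * τ)))
    (κ : ℝ) (hκ0 : 0 ≤ κ)
    (hκ : essSup (fun ω => (‖H ω‖₊ : ℝ≥0∞)) (volume.restrict (Set.Ioc (-π) π))
      = ENNReal.ofReal κ)
    (x₀ η : ℤ → ℂ) (hx₀ : Memℓp x₀ 2) (hη : Memℓp η 2)
    (X₀ : ℝ → ℂ) (hX₀ : IsZTransform x₀ X₀)
    (N : ℝ → ℂ)
    (hN1 : Integrable N (volume.restrict (Set.Ioc (-π) π)))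
    (hNcoef : ∀ τ : ℤ, η τ =
      ((1 / (2 * π) : ℝ) : ℂ) * ∫ ω in (-π)..π, N ω * Complex.exp (Complex.I * ω * τ))
    (σ : ℝ) (hσ : (∫ ω in Set.Ioc (-π) π, ‖N ω‖) = σ)
    (ε : ℝ)
    (hint : Integrable (fun ω => (H ω - 1) * X₀ ω) (volume.restrict (Set.Ioc (-π) π)))
    (hε : (1 / (2 * π)) * ∫ ω in Set.Ioc (-π) π, ‖(H ω - 1) * X₀ ω‖ ≤ ε) :
    ∀ τ : ℤ, ‖conv h (fun s => x₀ s + η s) τ - (x₀ τ + η τ)‖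
      ≤ ε + σ / (2 * π) * (κ + 1) := by
  intro τ
  set μ : Measure ℝ := volume.restrict (Set.Ioc (-π) π) with hμdef
  haveI : IsFiniteMeasure μ := ⟨by rw [hμdef, Measure.restrict_apply_univ]; exact measure_Ioc_lt_top⟩
  have hπ : (0:ℝ) < π := Real.pi_pos
  have hπle : (-π : ℝ) ≤ π := by linarith
  set c : ℂ := ((1 / (2 * π) : ℝ) : ℂ) with hcdef
  set E : ℤ → ℝ → ℂ := fun s ω => Complex.exp (Complex.I * ω * s) with hEdef
  set Y : ℝ → ℂ := fun ω => X₀ ω + N ω with hYdef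
  -- basic facts
  have hsum : Summable fun s : ℤ => ‖h s‖ := by
    have := hh1.summable (by norm_num : (0:ℝ) < (1:ℝ≥0∞).toReal)
    simpa using this
  have hsum' : Summable fun s : ℤ => ‖h (τ - s)‖ :=
    ((Equiv.subLeft τ).summable_iff).mpr hsum
  have Hcont : Continuous H := by
    have : H = fun ω : ℝ => ∑' u : ℤ, h u * Complex.exp (-(Complex.I * (ω:ℂ) * u)) := funext hH
    rw [this]
    refine continuous_tsum (fun u => Continuous.mul continuous_const (by fun_prop)) hsum
      (fun u ω => ?_)
    rw [norm_mul]
    have : ‖Complex.exp (-(Complex.I * ω * u))‖ = 1 := by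
      rw [Complex.norm_exp]; simp [Complex.mul_re]
    rw [this, mul_one]
  have Hmeas : AEStronglyMeasurable H μ := Hcont.aestronglyMeasurable
  have HboundAE : ∀ᵐ ω ∂μ, ‖H ω‖ ≤ κ := by
    have := ENNReal.ae_le_essSup (fun ω => (‖H ω‖₊ : ℝ≥0∞)) (μ := μ)
    rw [hκ] at this
    filter_upwards [this] with ω hω
    rw [ENNReal.ofReal, ENNReal.coe_le_coe] at hω
    calc ‖H ω‖ = (‖H ω‖₊ : ℝ) := rfl
      _ ≤ (κ.toNNReal : ℝ) := by exact_mod_cast hω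
      _ = κ := Real.coe_toNNReal κ hκ0
  have X₀int : Integrable X₀ μ := hX₀.1.integrable (by norm_num)
  have Yint : Integrable Y μ := X₀int.add hN1
  -- coefficient formula for x = x₀ + η
  have coef : ∀ s : ℤ, x₀ s + η s = c * ∫ ω, Y ω * E s ω ∂μ := by
    intro s
    have h1 := hX₀.2 s
    have h2 := hNcoef s
    rw [intervalIntegral.integral_of_le hπle] at h1 h2
    have hadd : ∫ ω, Y ω * E s ω ∂μ
        = (∫ ω, X₀ ω * E s ω ∂μ) + ∫ ω, N ω * E s ω ∂μ := by
      rw [← integral_add (integrable_mulE X₀int s) (integrable_mulE hN1 s)]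
      exact integral_congr_ae (Eventually.of_forall fun ω => by simp [hYdef, hEdef, add_mul])
    rw [h1, h2, hadd]
    ring
  -- the summand family
  set g : ℤ → ℝ → ℂ := fun s ω => (h (τ - s) * c) * (Y ω * E s ω) with hgdef
  have hgmeas : ∀ s : ℤ, AEStronglyMeasurable (g s) μ := fun s =>
    (Yint.aestronglyMeasurable.mul (contExpI s).aestronglyMeasurable).const_mul _
  have hgsum : ∑' s : ℤ, ∫⁻ ω, ‖g s ω‖₊ ∂μ ≠ ⊤ := by
    have hK : ∫⁻ ω, (‖Y ω‖₊ : ℝ≥0∞) ∂μ ≠ ⊤ := Yint.2.ne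
    have heach : ∀ s : ℤ, ∫⁻ ω, ‖g s ω‖₊ ∂μ
        = (‖h (τ - s) * c‖₊ : ℝ≥0∞) * ∫⁻ ω, (‖Y ω‖₊ : ℝ≥0∞) ∂μ := by
      intro s
      rw [← lintegral_const_mul' _ _ ENNReal.coe_ne_top]
      refine lintegral_congr fun ω => ?_
      have hE1 : ‖E s ω‖₊ = 1 := by
        ext; simpa [coe_nnnorm] using normExpI ω s
      rw [← ENNReal.coe_mul]
      congr 1
      rw [hgdef]
      simp only [nnnorm_mul, hE1, mul_one]
    simp only [heach]
    rw [ENNReal.tsum_mul_right]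
    refine ENNReal.mul_ne_top ?_ hK
    have hs2 : Summable fun s : ℤ => ‖h (τ - s) * c‖₊ := by
      rw [← NNReal.summable_coe]
      simpa [coe_nnnorm, norm_mul] using hsum'.mul_right ‖c‖
    exact ENNReal.tsum_coe_ne_top_iff_summable.mpr hs2
  -- main identity
  have key1 : conv h (fun s => x₀ s + η s) τ = ∑' s : ℤ, ∫ ω, g s ω ∂μ := by
    unfold conv
    refine tsum_congr fun s => ?_
    show h (τ - s) * (x₀ s + η s) = _
    rw [coef s, hgdef]
    rw [integral_const_mul]
    ring
  have key2 : (∑' s : ℤ, ∫ ω, g s ω ∂μ) = ∫ ω, (∑' s : ℤ, g s ω) ∂μ :=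
    (integral_tsum hgmeas hgsum).symm
  have key3 : ∀ ω : ℝ, (∑' s : ℤ, g s ω) = c * (H ω * (Y ω * E τ ω)) := fun ω =>
    tsum_shift h c (Y ω) (H ω) ω τ (hH ω)
  have convEq : conv h (fun s => x₀ s + η s) τ = c * ∫ ω, H ω * (Y ω * E τ ω) ∂μ := by
    rw [key1, key2]
    rw [integral_congr_ae (Eventually.of_forall key3), integral_const_mul]
  -- integrability of the pieces
  have intYE : Integrable (fun ω => Y ω * E τ ω) μ := integrable_mulE Yint τ
  have intHYE : Integrable (fun ω => H ω * (Y ω * E τ ω)) μ :=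
    intYE.bdd_mul Hmeas HboundAE
  have intA : Integrable (fun ω => ((H ω - 1) * X₀ ω) * E τ ω) μ := integrable_mulE hint τ
  have intH1N : Integrable (fun ω => (H ω - 1) * N ω) μ := by
    refine hN1.bdd_mul (c := κ + 1) (Hmeas.sub aestronglyMeasurable_const) ?_
    filter_upwards [HboundAE] with ω hω
    calc ‖H ω - 1‖ ≤ ‖H ω‖ + ‖(1:ℂ)‖ := norm_sub_le _ _
      _ ≤ κ + 1 := by rw [norm_one]; linarith
  have intB : Integrable (fun ω => ((H ω - 1) * N ω) * E τ ω) μ := integrable_mulE intH1N τ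
  -- the difference
  have diffEq : conv h (fun s => x₀ s + η s) τ - (x₀ τ + η τ)
      = c * ((∫ ω, ((H ω - 1) * X₀ ω) * E τ ω ∂μ) + ∫ ω, ((H ω - 1) * N ω) * E τ ω ∂μ) := by
    rw [convEq, coef τ, ← mul_sub, ← integral_sub intHYE intYE]
    congr 1
    rw [← integral_add intA intB]
    refine integral_congr_ae (Eventually.of_forall fun ω => ?_)
    simp only [hYdef]
    ring
  rw [diffEq]
  -- norm bounds
  have hcnorm : ‖c‖ = 1 / (2 * π) := by
    rw [hcdef, Complex.norm_real, Real.norm_eq_abs, abs_of_nonneg (by positivity)]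
  have hA : ∫ ω, ‖((H ω - 1) * X₀ ω) * E τ ω‖ ∂μ = ∫ ω, ‖(H ω - 1) * X₀ ω‖ ∂μ :=
    integral_congr_ae (Eventually.of_forall fun ω => by simp [hEdef, norm_mul, normExpI ω τ])
  have hB : ∫ ω, ‖((H ω - 1) * N ω) * E τ ω‖ ∂μ ≤ (κ + 1) * σ := by
    have hmono : ∫ ω, ‖((H ω - 1) * N ω) * E τ ω‖ ∂μ ≤ ∫ ω, (κ + 1) * ‖N ω‖ ∂μ := by
      refine integral_mono_ae intB.norm (hN1.norm.const_mul _) ?_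
      filter_upwards [HboundAE] with ω hω
      rw [norm_mul, normExpI, mul_one, norm_mul]
      have h1 : ‖H ω - 1‖ ≤ κ + 1 := by
        calc ‖H ω - 1‖ ≤ ‖H ω‖ + ‖(1:ℂ)‖ := norm_sub_le _ _
          _ ≤ κ + 1 := by rw [norm_one]; linarith
      exact mul_le_mul_of_nonneg_right h1 (norm_nonneg _)
    rw [integral_const_mul] at hmono
    rw [← hσ]
    exact hmono
  have hσ0 : 0 ≤ σ := by rw [← hσ]; positivity
  calc ‖c * ((∫ ω, ((H ω - 1) * X₀ ω) * E τ ω ∂μ) + ∫ ω, ((H ω - 1) * N ω) * E τ ω ∂μ)‖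
      = ‖c‖ * ‖(∫ ω, ((H ω - 1) * X₀ ω) * E τ ω ∂μ) + ∫ ω, ((H ω - 1) * N ω) * E τ ω ∂μ‖ :=
        norm_mul _ _
    _ ≤ ‖c‖ * (‖∫ ω, ((H ω - 1) * X₀ ω) * E τ ω ∂μ‖ + ‖∫ ω, ((H ω - 1) * N ω) * E τ ω ∂μ‖) := by
        refine mul_le_mul_of_nonneg_left (norm_add_le _ _) (norm_nonneg _)
    _ ≤ ‖c‖ * ((∫ ω, ‖((H ω - 1) * X₀ ω) * E τ ω‖ ∂μ) + ∫ ω, ‖((H ω - 1) * N ω) * E τ ω‖ ∂μ) := by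
        refine mul_le_mul_of_nonneg_left
          (add_le_add (norm_integral_le_integral_norm _) (norm_integral_le_integral_norm _))
          (norm_nonneg _)
    _ ≤ (1 / (2 * π)) * ((∫ ω, ‖(H ω - 1) * X₀ ω‖ ∂μ) + (κ + 1) * σ) := by
        rw [hcnorm, hA]
        refine mul_le_mul_of_nonneg_left (add_le_add_right hB _) (by positivity)
    _ = (1 / (2 * π)) * (∫ ω, ‖(H ω - 1) * X₀ ω‖ ∂μ) + σ / (2 * π) * (κ + 1) := by ring
    _ ≤ ε + σ / (2 * π) * (κ + 1) := by
        exact add_le_add_left hε _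

end
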